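/- For any propositional disjunctive logic program P, any hypothesis Δ ⊆ DB_P^−, and any positive disjunction α ∈ DB_P^+: Δ ⊢_P α if and only if Δ ⊢_{Lft(P)} α, where Lft(P) is the least fixpoint transformation of P. -/

import Mathlib

open scoped Classical

namespace DLP

/-- A (propositional) rule `a₁ ∨ ⋯ ∨ aₙ ← b₁, …, bₘ, not c₁, …, not cₜ`,
with head atoms `head`, positive body atoms `bodyPos` and (default-)negated
body atoms `bodyNeg` (heads and bodies are sets of literals). -/
structure Rule (Atom : Type) where
  head : Finset Atom
  bodyPos : Finset Atom
  bodyNeg : Finset Atom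

/-- A pure disjunction: a (positive) disjunction of atoms, or a (negative)
disjunction of default-negated atoms. -/
inductive PDisj (Atom : Type) where
  | pos : Finset Atom → PDisj Atom
  | neg : Finset Atom → PDisj Atom

/-- The atoms occurring in a pure disjunction. -/
def PDisj.atomsOf {Atom : Type} : PDisj Atom → Finset Atom
  | .pos A => A
  | .neg A => A

/-- Sub-disjunction relation between pure disjunctions (same polarity). -/
def SubDisj {Atom : Type} : PDisj Atom → PDisj Atom → Prop
  | .pos A, .pos B => A ⊆ B
  | .neg A, .neg B => A ⊆ B
  | .pos _, .neg _ => False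
  | .neg _, .pos _ => False

/-- A disjunctive logic program: a set of rules (over a finite atom alphabet,
so every program is finite). -/
abbrev Program (Atom : Type) := Set (Rule Atom)

variable {Atom : Type} [Fintype Atom] [DecidableEq Atom]

/-- Well-formedness: every rule head is nonempty (n > 0). -/
def IsProgram (P : Program Atom) : Prop := ∀ r ∈ P, r.head.Nonempty

/-- The atoms occurring in rule heads of `P`. -/
def heads (P : Program Atom) : Set Atom := {a | ∃ r ∈ P, a ∈ r.head}

/-- Closure of a set of pure disjunctions under super-disjunctions
(model states are assumed closed under implication of pure disjunctions). -/
def stClosure (S : Set (PDisj Atom)) : Set (PDisj Atom) := {d' | ∃ d ∈ S, SubDisj d d'}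

/-- A model state: a set of (nonempty) pure disjunctions closed under
super-disjunctions. -/
def IsModelState (S : Set (PDisj Atom)) : Prop :=
  (∀ d ∈ S, (PDisj.atomsOf d).Nonempty) ∧ ∀ d ∈ S, ∀ d', SubDisj d d' → d' ∈ S

/-- Consistency of a model state. -/
def ConsistentState (S : Set (PDisj Atom)) : Prop :=
  (¬ ∃ A : Finset Atom, A.Nonempty ∧ PDisj.pos A ∈ S ∧ ∀ a ∈ A, PDisj.neg {a} ∈ S) ∧
  (¬ ∃ A : Finset Atom, A.Nonempty ∧ PDisj.neg A ∈ S ∧ ∀ a ∈ A, PDisj.pos {a} ∈ S)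

/-! ### Classical inference for (positive) programs -/

/-- An interpretation `I` satisfies a rule (read classically). -/
def SatisfiesRule (I : Set Atom) (r : Rule Atom) : Prop :=
  ((↑r.bodyPos : Set Atom) ⊆ I ∧ ∀ c ∈ r.bodyNeg, c ∉ I) → ∃ a ∈ r.head, a ∈ I

/-- Classical propositional entailment of a positive disjunction from a program. -/
def Entails (P : Program Atom) (A : Finset Atom) : Prop :=
  ∀ I : Set Atom, (∀ r ∈ P, SatisfiesRule I r) → ∃ a ∈ A, a ∈ I

/-- The least model state of a positive program: all entailed positive disjunctions. -/
def msState (P : Program Atom) : Set (Finset Atom) := {A | A.Nonempty ∧ Entails P A}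

/-- Canonical form: the minimal disjunctions of `S`. -/
def canonical (S : Set (Finset Atom)) : Set (Finset Atom) := {A | A ∈ S ∧ ¬ ∃ A' ∈ S, A' ⊂ A}

/-! ### Argumentation: hypotheses, support, attack, WFDS -/

/-- A hypothesis: a set of (nonempty) negative disjunctions, each represented
by its finite set of atoms. -/
def IsHyp (Δ : Set (Finset Atom)) : Prop := ∀ D ∈ Δ, D.Nonempty

/-- The reduct `P⁺_Δ` of `P` with respect to a hypothesis `Δ`. -/
def reduct (P : Program Atom) (Δ : Set (Finset Atom)) : Program Atom :=
  {r' | ∃ r ∈ P, (∀ c ∈ r.bodyNeg, ({c} : Finset Atom) ∈ Δ) ∧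
    r' = ⟨r.head, r.bodyPos, ∅⟩}

/-- `Δ ⊢_P A`: `Δ` is a supporting hypothesis for the positive disjunction `A`. -/
def Supports (P : Program Atom) (Δ : Set (Finset Atom)) (A : Finset Atom) : Prop :=
  ∃ B : Finset Atom, (∀ b ∈ B, ({b} : Finset Atom) ∈ Δ) ∧
    A ∪ B ∈ canonical (msState (reduct P Δ))

/-- Attack relation, parameterized by a support relation `sup`. -/
def AttacksWith (sup : Set (Finset Atom) → Finset Atom → Prop)
    (Δ Δ' : Set (Finset Atom)) : Prop :=
  (∃ β ∈ Δ', β.Nonempty ∧ ∀ b ∈ β, sup Δ {b}) ∨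
  (∃ B : Finset Atom, B.Nonempty ∧ (∀ b ∈ B, ({b} : Finset Atom) ∈ Δ') ∧ sup Δ B)

/-- The assumption `not a` is admissible with respect to `Δ`. -/
def AdmissibleWith (sup : Set (Finset Atom) → Finset Atom → Prop)
    (Δ : Set (Finset Atom)) (a : Atom) : Prop :=
  ∀ Δ' : Set (Finset Atom), IsHyp Δ' →
    AttacksWith sup Δ' {({a} : Finset Atom)} → AttacksWith sup Δ Δ'

/-- The operator `A_P`. -/
def AOpWith (sup : Set (Finset Atom) → Finset Atom → Prop)
    (Δ : Set (Finset Atom)) : Set (Finset Atom) :=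
  {D | D.Nonempty ∧ ∃ a ∈ D, AdmissibleWith sup Δ a}

/-- The well-founded disjunctive hypothesis: least fixpoint of `A_P`
(obtained by iteration from the empty hypothesis). -/
def WFDHWith (sup : Set (Finset Atom) → Finset Atom → Prop) : Set (Finset Atom) :=
  ⋃ k : ℕ, (AOpWith sup)^[k] ∅

/-- The induced well-founded model state `WFDH ∪ cons(WFDH)`
(closed under super-disjunctions). -/
def WFDSWith (sup : Set (Finset Atom) → Finset Atom → Prop) : Set (PDisj Atom) :=
  stClosure ({d | ∃ D ∈ WFDHWith sup, d = PDisj.neg D} ∪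
    {d | ∃ A : Finset Atom, A.Nonempty ∧ sup (WFDHWith sup) A ∧ d = PDisj.pos A})

/-- The attack relation `⇝_P` of `P`. -/
def Attacks (P : Program Atom) : Set (Finset Atom) → Set (Finset Atom) → Prop :=
  AttacksWith (Supports P)

/-- `WFDH(P)`. -/
def WFDH (P : Program Atom) : Set (Finset Atom) := WFDHWith (Supports P)

/-- `WFDS(P)`, the argumentation-based well-founded semantics. -/
def WFDS (P : Program Atom) : Set (PDisj Atom) := WFDSWith (Supports P)

/-! ### The hyperresolution operator `T^S` and the alternative semantics WFDS' -/

/-- The immediate consequence operator `T_Q^S` of a positive program `Q`. -/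
def TS (Q : Program Atom) (J : Set (Finset Atom)) : Set (Finset Atom) :=
  {A | ∃ r ∈ Q, ∃ f : Atom → Finset Atom,
    (∀ b ∈ r.bodyPos, insert b (f b) ∈ J) ∧ A = r.head ∪ r.bodyPos.biUnion f}

/-- `T_Q^S ↑ ω`. -/
def TSomega (Q : Program Atom) : Set (Finset Atom) := ⋃ k : ℕ, (TS Q)^[k] ∅

/-- `Δ ⊢'_P A`: support via the fixpoint of the hyperresolution operator. -/
def Supports' (P : Program Atom) (Δ : Set (Finset Atom)) (A : Finset Atom) : Prop :=
  ∃ B : Finset Atom, (∀ b ∈ B, ({b} : Finset Atom) ∈ Δ) ∧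
    A ∪ B ∈ TSomega (reduct P Δ)

/-- `WFDS'(P)`: as `WFDS(P)` but with `⊢_P` replaced by `⊢'_P` throughout. -/
def WFDS' (P : Program Atom) : Set (PDisj Atom) := WFDSWith (Supports' P)

/-! ### Program transformations -/

/-- `r'` is an implication of `r`. -/
def Implication (r' r : Rule Atom) : Prop :=
  r.head ⊆ r'.head ∧ r.bodyPos ⊆ r'.bodyPos ∧ r.bodyNeg ⊆ r'.bodyNeg ∧
    (r.head ⊂ r'.head ∨ r.bodyPos ⊂ r'.bodyPos ∨ r.bodyNeg ⊂ r'.bodyNeg)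

/-- `r'` is an s-implication of `r`: `r' ≠ r` and either `r'` is an implication of `r`,
or `r` can be obtained from `r'` by changing some negative body literals of `r'`
into head atoms and possibly removing some body literals. -/
def SImplication (r' r : Rule Atom) : Prop :=
  r' ≠ r ∧ (Implication r' r ∨
    ∃ V ⊆ r'.bodyNeg, r.head = r'.head ∪ V ∧ r.bodyPos ⊆ r'.bodyPos ∧
      r.bodyNeg ⊆ r'.bodyNeg \ V)

/-- Unfolding. -/
def Unfolding (P1 P2 : Program Atom) : Prop :=
  ∃ r ∈ P1, ∃ b ∈ r.bodyPos,
    P2 = (P1 \ {r}) ∪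
      {r'' | ∃ r' ∈ P1, b ∈ r'.head ∧
        r'' = ⟨r.head ∪ r'.head.erase b, r.bodyPos.erase b ∪ r'.bodyPos,
               r.bodyNeg ∪ r'.bodyNeg⟩}

/-- Elimination of tautologies. -/
def ElimTaut (P1 P2 : Program Atom) : Prop :=
  ∃ r ∈ P1, (r.head ∩ r.bodyPos).Nonempty ∧ P2 = P1 \ {r}

/-- Elimination of s-implications. -/
def ElimSImpl (P1 P2 : Program Atom) : Prop :=
  ∃ r' ∈ P1, (∃ r ∈ P1, SImplication r' r) ∧ P2 = P1 \ {r'}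

/-- Elimination of nonminimal rules. -/
def ElimNonmin (P1 P2 : Program Atom) : Prop :=
  ∃ r' ∈ P1, (∃ r ∈ P1, r' ≠ r ∧ Implication r' r) ∧ P2 = P1 \ {r'}

/-- Positive reduction. -/
def PosRed (P1 P2 : Program Atom) : Prop :=
  ∃ r ∈ P1, ∃ c ∈ r.bodyNeg, c ∉ heads P1 ∧
    P2 = (P1 \ {r}) ∪ {(⟨r.head, r.bodyPos, r.bodyNeg.erase c⟩ : Rule Atom)}

/-- Negative reduction. -/
def NegRed (P1 P2 : Program Atom) : Prop :=
  ∃ r ∈ P1, (∃ r' ∈ P1, r'.bodyPos = ∅ ∧ r'.bodyNeg = ∅ ∧ r'.head ⊆ r.bodyNeg) ∧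
    P2 = P1 \ {r}

/-! ### BD-semantics and the transformation-based semantics -/

/-- An (abstract) BD-semantics. -/
structure BDSemantics (Atom : Type) [Fintype Atom] [DecidableEq Atom] where
  sem : Program Atom → Set (PDisj Atom)
  nonempty_mem : ∀ P : Program Atom, IsProgram P → ∀ d ∈ sem P, (PDisj.atomsOf d).Nonempty
  closed : ∀ P : Program Atom, IsProgram P → ∀ d ∈ sem P, ∀ d', SubDisj d d' → d' ∈ sem P
  fact_mem : ∀ P : Program Atom, IsProgram P → ∀ r ∈ P, r.bodyPos = ∅ → r.bodyNeg = ∅ →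
    PDisj.pos r.head ∈ sem P
  neg_mem : ∀ P : Program Atom, IsProgram P → ∀ a : Atom, a ∉ heads P →
    PDisj.neg {a} ∈ sem P

/-- A BD-semantics `S` allows (is invariant under) a program transformation `T`. -/
def Allows (S : BDSemantics Atom) (T : Program Atom → Program Atom → Prop) : Prop :=
  ∀ P1 P2 : Program Atom, IsProgram P1 → IsProgram P2 → T P1 P2 → S.sem P1 = S.sem P2

/-- `S` allows all program transformations in `T*_WFS`. -/
def AllowsStar (S : BDSemantics Atom) : Prop :=
  Allows S Unfolding ∧ Allows S ElimTaut ∧ Allows S ElimSImpl ∧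
    Allows S PosRed ∧ Allows S NegRed

/-- `S` allows all program transformations in `T_WFS`. -/
def AllowsWFSset (S : BDSemantics Atom) : Prop :=
  Allows S Unfolding ∧ Allows S ElimTaut ∧ Allows S ElimNonmin ∧
    Allows S PosRed ∧ Allows S NegRed

/-- `D-WFS*`: the weakest BD-semantics allowing all transformations in `T*_WFS`. -/
def DWFSstar (P : Program Atom) : Set (PDisj Atom) :=
  ⋂ S ∈ {S : BDSemantics Atom | AllowsStar S}, S.sem P

/-- `D-WFS`: the weakest BD-semantics allowing all transformations in `T_WFS`. -/
def DWFS (P : Program Atom) : Set (PDisj Atom) :=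
  ⋂ S ∈ {S : BDSemantics Atom | AllowsWFSset S}, S.sem P

/-! ### The least fixpoint transformation and the strong residual program -/

/-- The generalized consequence operator `T_P^G` on sets of conditional facts. -/
def TG (P : Program Atom) (J : Set (Rule Atom)) : Set (Rule Atom) :=
  {C | ∃ r ∈ P, ∃ hf : Atom → Finset Atom, ∃ bf : Atom → Finset Atom,
    (∀ b ∈ r.bodyPos, (⟨insert b (hf b), ∅, bf b⟩ : Rule Atom) ∈ J) ∧
    C = ⟨r.head ∪ r.bodyPos.biUnion hf, ∅, r.bodyNeg ∪ r.bodyPos.biUnion bf⟩}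

/-- The least fixpoint transformation `Lft(P) = T_P^G ↑ ω`, a negative program. -/
def Lft (P : Program Atom) : Program Atom := ⋃ k : ℕ, (TG P)^[k] ∅

/-- The strong reduction operator `R*` on negative programs. -/
noncomputable def Rstar (N : Program Atom) : Program Atom :=
  {r' | ∃ r ∈ N, (¬ ∃ r'' ∈ N, SImplication r r'') ∧
    r' = ⟨r.head, r.bodyPos, r.bodyNeg.filter (fun c => c ∈ heads N)⟩}

/-- The strong residual program `res*(P)`: the fixpoint reached by iterating `R*`
starting from `Lft(P)`. -/
noncomputable def resStar (P : Program Atom) : Program Atom :=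
  if h : ∃ k : ℕ, Rstar ((Rstar (Atom := Atom))^[k] (Lft P)) = (Rstar (Atom := Atom))^[k] (Lft P)
  then (Rstar (Atom := Atom))^[Nat.find h] (Lft P)
  else ∅

/-! ### Unfounded sets -/

/-- `body(r)` is true with respect to the model state `S`. -/
def BodyTrue (S : Set (PDisj Atom)) (r : Rule Atom) : Prop :=
  (∀ b ∈ r.bodyPos, PDisj.pos {b} ∈ S) ∧ (∀ c ∈ r.bodyNeg, PDisj.neg {c} ∈ S)

/-- `body(r)` is false with respect to the model state `S`. -/
def BodyFalse (S : Set (PDisj Atom)) (r : Rule Atom) : Prop :=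
  (∃ b ∈ r.bodyPos, PDisj.neg {b} ∈ S) ∨ (∃ c ∈ r.bodyNeg, PDisj.pos {c} ∈ S) ∨
  (∃ A : Finset Atom, A.Nonempty ∧ A ⊆ r.bodyNeg ∧ PDisj.pos A ∈ S)

/-- `X` is an unfounded set for `P` with respect to the model state `S`. -/
def Unfounded (P : Program Atom) (S : Set (PDisj Atom)) (X : Set Atom) : Prop :=
  ∀ a ∈ X, ∀ r ∈ P, a ∈ r.head →
    BodyFalse S r ∨ (∃ x ∈ X, x ∈ r.bodyPos) ∨
    (BodyTrue S r → ∃ A : Finset Atom, A.Nonempty ∧ (↑A : Set Atom) ⊆ (↑r.head : Set Atom) \ X ∧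
      PDisj.pos A ∈ S)

/-- The candidate greatest unfounded set: the union of all unfounded sets
(it is the greatest unfounded set exactly when it is itself unfounded). -/
def UP (P : Program Atom) (S : Set (PDisj Atom)) : Set Atom := ⋃₀ {X | Unfounded P S X}

/-- The operator `T_P` on model states. -/
def TPop (P : Program Atom) (S : Set (PDisj Atom)) : Set (Finset Atom) :=
  {A | A.Nonempty ∧ ∃ r ∈ P, BodyTrue S r ∧ A ⊆ r.head ∧
    ∀ a ∈ r.head, a ∉ A → PDisj.neg {a} ∈ S}

/-- The operator `W_P(S) = T_P(S) ∪ not.U_P(S)`. -/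
def WP (P : Program Atom) (S : Set (PDisj Atom)) : Set (PDisj Atom) :=
  {d | ∃ A ∈ TPop P S, d = PDisj.pos A} ∪ {d | ∃ p ∈ UP P S, d = PDisj.neg ({p} : Finset Atom)}

/-- The sequence `W_0 = ∅`, `W_k = W_P(W_{k-1})`. -/
def Wseq (P : Program Atom) (k : ℕ) : Set (PDisj Atom) := (WP P)^[k] ∅

/-- `U-WFS(P)`: the least fixpoint of `W_P` (closed under super-disjunctions). -/
def UWFS (P : Program Atom) : Set (PDisj Atom) := stClosure (⋃ k : ℕ, Wseq P k)

section LftLemmas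

variable {Atom : Type} [Fintype Atom] [DecidableEq Atom]

lemma TG_mono (P : Program Atom) {J J' : Set (Rule Atom)} (h : J ⊆ J') : TG P J ⊆ TG P J' := by
  rintro C ⟨r, hr, hf, bf, hfacts, rfl⟩
  exact ⟨r, hr, hf, bf, fun b hb => h (hfacts b hb), rfl⟩

lemma iter_mono (P : Program Atom) : ∀ k, (TG P)^[k] ∅ ⊆ (TG P)^[k+1] ∅
  | 0 => by simp
  | k+1 => by
      rw [Function.iterate_succ_apply', Function.iterate_succ_apply']
      exact TG_mono P (iter_mono P k)

lemma iter_le (P : Program Atom) {k l : ℕ} (h : k ≤ l) :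
    (TG P)^[k] (∅ : Set (Rule Atom)) ⊆ (TG P)^[l] ∅ := by
  induction h with
  | refl => exact subset_rfl
  | step _ ih => exact ih.trans (iter_mono P _)

lemma lft_shape (P : Program Atom) : ∀ C ∈ Lft P, C.bodyPos = ∅ := by
  intro C hC
  obtain ⟨k, hk⟩ := Set.mem_iUnion.mp hC
  cases k with
  | zero => simp at hk
  | succ k =>
      rw [Function.iterate_succ_apply'] at hk
      obtain ⟨r, _, hf, bf, _, rfl⟩ := hk
      rfl

lemma TG_lft_subset (P : Program Atom) : TG P (Lft P) ⊆ Lft P := by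
  classical
  rintro C ⟨r, hr, hf, bf, hfacts, rfl⟩
  have key : ∀ b, b ∈ r.bodyPos →
      ∃ k, (⟨insert b (hf b), ∅, bf b⟩ : Rule Atom) ∈ (TG P)^[k] ∅ :=
    fun b hb => Set.mem_iUnion.mp (hfacts b hb)
  let g : Atom → ℕ := fun b => if h : b ∈ r.bodyPos then (key b h).choose else 0
  set K := r.bodyPos.sup g with hK
  have hmem : (⟨r.head ∪ r.bodyPos.biUnion hf, ∅, r.bodyNeg ∪ r.bodyPos.biUnion bf⟩ : Rule Atom)
      ∈ (TG P)^[K+1] ∅ := by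
    rw [Function.iterate_succ_apply']
    refine ⟨r, hr, hf, bf, ?_, rfl⟩
    intro b hb
    have h1 := (key b hb).choose_spec
    have h2 : g b = (key b hb).choose := dif_pos hb
    refine iter_le P (le_of_eq_of_le h2.symm (Finset.le_sup hb)) ?_
    exact h1
  exact Set.mem_iUnion.mpr ⟨K + 1, hmem⟩

lemma lft_sound (P : Program Atom) (Δ : Set (Finset Atom)) :
    ∀ k : ℕ, ∀ C ∈ (TG P)^[k] (∅ : Set (Rule Atom)),
      (∀ c ∈ C.bodyNeg, ({c} : Finset Atom) ∈ Δ) → Entails (reduct P Δ) C.head := by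
  intro k
  induction k with
  | zero => simp
  | succ k ih =>
      intro C hC hneg
      rw [Function.iterate_succ_apply'] at hC
      obtain ⟨r, hr, hf, bf, hfacts, rfl⟩ := hC
      intro I hI
      by_cases hbp : ∀ b ∈ r.bodyPos, b ∈ I
      · have hrule : (⟨r.head, r.bodyPos, ∅⟩ : Rule Atom) ∈ reduct P Δ :=
          ⟨r, hr, fun c hc => hneg c (Finset.mem_union_left _ hc), rfl⟩
        obtain ⟨a, ha, haI⟩ := hI _ hrule ⟨fun b hb => hbp b (by exact_mod_cast hb), by simp⟩
        exact ⟨a, Finset.mem_union_left _ ha, haI⟩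
      · push_neg at hbp
        obtain ⟨b, hb, hbI⟩ := hbp
        have hcond : ∀ c ∈ (⟨insert b (hf b), ∅, bf b⟩ : Rule Atom).bodyNeg,
            ({c} : Finset Atom) ∈ Δ := fun c hc =>
          hneg c (Finset.mem_union_right _ (Finset.mem_biUnion.mpr ⟨b, hb, hc⟩))
        obtain ⟨a, ha, haI⟩ := ih _ (hfacts b hb) hcond I hI
        rcases Finset.mem_insert.mp ha with rfl | ha'
        · exact absurd haI hbI
        · exact ⟨a, Finset.mem_union_right _ (Finset.mem_biUnion.mpr ⟨b, hb, ha'⟩), haI⟩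

lemma lft_complete (P : Program Atom) (Δ : Set (Finset Atom)) (A : Finset Atom)
    (h : Entails (reduct P Δ) A) :
    ∃ C ∈ Lft P, (∀ c ∈ C.bodyNeg, ({c} : Finset Atom) ∈ Δ) ∧ C.head ⊆ A := by
  classical
  by_contra hcon
  push_neg at hcon
  -- the collection of "countermodels avoiding A" hitting every derived head
  set 𝒮 : Set (Finset Atom) :=
    {I | (∀ C ∈ Lft P, (∀ c ∈ C.bodyNeg, ({c} : Finset Atom) ∈ Δ) →
        (C.head ∩ I).Nonempty) ∧ ∀ a ∈ I, a ∉ A} with h𝒮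
  have hne : 𝒮.Nonempty := by
    refine ⟨Finset.univ.filter (fun a => a ∉ A), ?_, ?_⟩
    · intro C hC hcond
      obtain ⟨x, hx, hxA⟩ := Finset.not_subset.mp (hcon C hC hcond)
      exact ⟨x, Finset.mem_inter.mpr ⟨hx, Finset.mem_filter.mpr ⟨Finset.mem_univ x, hxA⟩⟩⟩
    · intro a ha
      exact (Finset.mem_filter.mp ha).2
  obtain ⟨I, hI𝒮, hmin⟩ :=
    show ∃ a ∈ 𝒮, ∀ a' ∈ 𝒮, id a' ≤ id a → id a = id a' from by
      obtain ⟨i, hi, hm⟩ := Set.Finite.exists_minimalFor id 𝒮 (Set.toFinite 𝒮) hne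
      exact ⟨i, hi, fun a' ha' hle => le_antisymm (hm ha' hle) hle⟩
  simp only [id] at hmin
  have hmodel : ∀ r' ∈ reduct P Δ, SatisfiesRule (↑I : Set Atom) r' := by
    rintro r' ⟨r, hr, hΔr, rfl⟩
    rintro ⟨hbp, -⟩
    by_contra hhead
    push_neg at hhead
    have key : ∀ b, b ∈ r.bodyPos → ∃ C : Rule Atom, C ∈ Lft P ∧
        (∀ c ∈ C.bodyNeg, ({c} : Finset Atom) ∈ Δ) ∧ b ∈ C.head ∧
        ∀ x ∈ C.head ∩ I, x = b := by
      intro b hb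
      have hbI : b ∈ I := by exact_mod_cast hbp (Finset.mem_coe.mpr hb)
      have herase : I.erase b ∉ 𝒮 := by
        intro hmem
        have := hmin _ hmem (Finset.erase_subset _ _)
        rw [this] at hbI
        exact (Finset.mem_erase.mp hbI).1 rfl
      have h2 : ∀ a ∈ I.erase b, a ∉ A := fun a ha =>
        hI𝒮.2 a (Finset.mem_of_mem_erase ha)
      have h1 : ¬ ∀ C ∈ Lft P, (∀ c ∈ C.bodyNeg, ({c} : Finset Atom) ∈ Δ) →
          (C.head ∩ I.erase b).Nonempty := fun hall => herase ⟨hall, h2⟩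
      push_neg at h1
      obtain ⟨C, hC, hcond, hempty⟩ := h1
      refine ⟨C, hC, hcond, ?_, ?_⟩
      · obtain ⟨x, hx⟩ := hI𝒮.1 C hC hcond
        obtain ⟨hx1, hx2⟩ := Finset.mem_inter.mp hx
        by_cases hxb : x = b
        · exact hxb ▸ hx1
        · exact absurd ⟨x, Finset.mem_inter.mpr ⟨hx1, Finset.mem_erase.mpr ⟨hxb, hx2⟩⟩⟩ (Finset.not_nonempty_iff_eq_empty.mpr hempty)
      · intro x hx
        obtain ⟨hx1, hx2⟩ := Finset.mem_inter.mp hx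
        by_contra hxb
        exact absurd ⟨x, Finset.mem_inter.mpr ⟨hx1, Finset.mem_erase.mpr ⟨hxb, hx2⟩⟩⟩ (Finset.not_nonempty_iff_eq_empty.mpr hempty)
    have key' : ∀ b : Atom, ∃ C : Rule Atom, b ∈ r.bodyPos → (C ∈ Lft P ∧
        (∀ c ∈ C.bodyNeg, ({c} : Finset Atom) ∈ Δ) ∧ b ∈ C.head ∧
        ∀ x ∈ C.head ∩ I, x = b) := by
      intro b
      by_cases hb : b ∈ r.bodyPos
      · obtain ⟨C, hC⟩ := key b hb
        exact ⟨C, fun _ => hC⟩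
      · exact ⟨⟨∅, ∅, ∅⟩, fun h => absurd h hb⟩
    choose Cb hCb using key'
    set hf : Atom → Finset Atom := fun b => (Cb b).head.erase b with hhf
    set bf : Atom → Finset Atom := fun b => (Cb b).bodyNeg with hbf
    have hCnew : (⟨r.head ∪ r.bodyPos.biUnion hf, ∅, r.bodyNeg ∪ r.bodyPos.biUnion bf⟩ :
        Rule Atom) ∈ Lft P := by
      refine TG_lft_subset P ⟨r, hr, hf, bf, ?_, rfl⟩
      intro b hb
      obtain ⟨hC1, hC2, hC3, hC4⟩ := hCb b hb
      have heq : (⟨insert b (hf b), ∅, bf b⟩ : Rule Atom) = Cb b := by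
        have e1 : insert b (hf b) = (Cb b).head := Finset.insert_erase hC3
        have e2 : (Cb b).bodyPos = ∅ := lft_shape P _ hC1
        show (⟨insert b (hf b), ∅, bf b⟩ : Rule Atom) =
          ⟨(Cb b).head, (Cb b).bodyPos, (Cb b).bodyNeg⟩
        rw [e1, e2]
      rw [heq]
      exact hC1
    have hcondnew : ∀ c ∈ (r.bodyNeg ∪ r.bodyPos.biUnion bf), ({c} : Finset Atom) ∈ Δ := by
      intro c hc
      rcases Finset.mem_union.mp hc with hc | hc
      · exact hΔr c hc
      · obtain ⟨b, hb, hcb⟩ := Finset.mem_biUnion.mp hc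
        exact (hCb b hb).2.1 c hcb
    obtain ⟨x, hx⟩ := hI𝒮.1 _ hCnew hcondnew
    obtain ⟨hx1, hx2⟩ := Finset.mem_inter.mp hx
    rcases Finset.mem_union.mp hx1 with hx1 | hx1
    · exact hhead x hx1 (Finset.mem_coe.mpr hx2)
    · obtain ⟨b, hb, hxb⟩ := Finset.mem_biUnion.mp hx1
      obtain ⟨hxne, hxh⟩ := Finset.mem_erase.mp hxb
      exact hxne ((hCb b hb).2.2.2 x (Finset.mem_inter.mpr ⟨hxh, hx2⟩))
  obtain ⟨a, haA, haI⟩ := h (↑I : Set Atom) hmodel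
  exact hI𝒮.2 a (Finset.mem_coe.mp haI) haA

lemma entails_reduct_iff (P : Program Atom) (Δ : Set (Finset Atom)) (A : Finset Atom) :
    Entails (reduct P Δ) A ↔
      ∃ C ∈ Lft P, (∀ c ∈ C.bodyNeg, ({c} : Finset Atom) ∈ Δ) ∧ C.head ⊆ A := by
  constructor
  · exact lft_complete P Δ A
  · rintro ⟨C, hC, hcond, hsub⟩ I hI
    obtain ⟨k, hk⟩ := Set.mem_iUnion.mp hC
    obtain ⟨a, ha, haI⟩ := lft_sound P Δ k C hk hcond I hI
    exact ⟨a, hsub ha, haI⟩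

lemma entails_lftreduct_iff (P : Program Atom) (Δ : Set (Finset Atom)) (A : Finset Atom) :
    Entails (reduct (Lft P) Δ) A ↔
      ∃ C ∈ Lft P, (∀ c ∈ C.bodyNeg, ({c} : Finset Atom) ∈ Δ) ∧ C.head ⊆ A := by
  constructor
  · intro h
    by_contra hcon
    push_neg at hcon
    have hmodel : ∀ r' ∈ reduct (Lft P) Δ, SatisfiesRule {a | a ∉ A} r' := by
      rintro r' ⟨C, hC, hcond, rfl⟩
      rintro ⟨-, -⟩
      obtain ⟨x, hx, hxA⟩ := Finset.not_subset.mp (hcon C hC hcond)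
      exact ⟨x, hx, hxA⟩
    obtain ⟨a, haA, ha⟩ := h {a | a ∉ A} hmodel
    exact ha haA
  · rintro ⟨C, hC, hcond, hsub⟩ I hI
    have hr' : (⟨C.head, C.bodyPos, ∅⟩ : Rule Atom) ∈ reduct (Lft P) Δ :=
      ⟨C, hC, fun c hc => hcond c hc, rfl⟩
    have hpos := lft_shape P C hC
    obtain ⟨a, ha, haI⟩ := hI _ hr' ⟨by simp [hpos], by simp⟩
    exact ⟨a, hsub ha, haI⟩

lemma msState_lft_eq (P : Program Atom) (Δ : Set (Finset Atom)) :
    msState (reduct P Δ) = msState (reduct (Lft P) Δ) := by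
  ext A
  unfold msState
  rw [Set.mem_setOf_eq, Set.mem_setOf_eq, entails_reduct_iff, entails_lftreduct_iff]

end LftLemmas

/-- For any propositional disjunctive logic program `P`, any hypothesis
`Δ ⊆ DB_P^-`, and any positive disjunction `α ∈ DB_P^+`:
`Δ ⊢_P α` if and only if `Δ ⊢_{Lft(P)} α`. -/
theorem supports_lft_iff
    {Atom : Type} [Fintype Atom] [DecidableEq Atom]
    (P : Program Atom) (hP : IsProgram P)
    (Δ : Set (Finset Atom)) (hΔ : IsHyp Δ)
    (α : Finset Atom) (hα : α.Nonempty) :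
    Supports P Δ α ↔ Supports (Lft P) Δ α := by
  unfold Supports
  rw [msState_lft_eq P Δ]

end DLP
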